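/- The Hasse polynomial H_k(x) = Σ_{τ∈S_k} u_τ ∏_{i=-m}^{-1} x_{-r_i - τ(i)} ∏_{i=1}^{n} x_{r_i - τ(i)}, where each u_τ is a p-adic unit, is a nonzero polynomial (since some monomial appears exactly once among the summands). -/

import Mathlib

open scoped Classical

noncomputable section

/-- `r_i = n - d·{-(pi-n)/d} + d` for `i > 0` and `r_i = m - e·{(pi+m)/e} + e` for `i < 0`,
written with `d·{-(pi-n)/d} = (n - pi) mod d` and `e·{(pi+m)/e} = (pi + m) mod e`. -/
def rfun (p d e m n : ℕ) (i : ℤ) : ℤ :=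
  if 0 < i then (n : ℤ) - (((n : ℤ) - p * i) % d) + d
  else (m : ℤ) - (((p : ℤ) * i + m) % e) + e

/-- The index set `{-m, …, n}`. -/
abbrev IdxSet (m n : ℕ) : Finset ℤ := Finset.Icc (-(m : ℤ)) (n : ℤ)

/-- `S_k`: permutations `τ` of `{-m, …, n}` with `τ(0) = 0`, `τ(i) ≥ r_i - d` for `i > 0`
and `τ(i) ≤ -r_i + e` for `i < 0`. -/
def Sk (p d e m n : ℕ) : Finset (Equiv.Perm {x // x ∈ IdxSet m n}) :=
  Finset.univ.filter fun τ =>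
    (∀ i : {x // x ∈ IdxSet m n}, i.1 = 0 → (τ i).1 = 0) ∧
    (∀ i : {x // x ∈ IdxSet m n}, 0 < i.1 → rfun p d e m n i.1 - d ≤ (τ i).1) ∧
    (∀ i : {x // x ∈ IdxSet m n}, i.1 < 0 → (τ i).1 ≤ -(rfun p d e m n i.1) + e)

/-- The monomial `∏_{i=-m}^{-1} x_{-r_i-τ(i)} · ∏_{i=1}^{n} x_{r_i-τ(i)}` attached to `τ`,
as a polynomial in the variables `x_j`, `j ∈ ℤ`. -/
def monom (p d e m n : ℕ) (R : Type*) [CommRing R]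
    (τ : Equiv.Perm {x // x ∈ IdxSet m n}) : MvPolynomial ℤ R :=
  ∏ i : {x // x ∈ IdxSet m n},
    if 0 < i.1 then MvPolynomial.X (rfun p d e m n i.1 - (τ i).1)
    else if i.1 < 0 then MvPolynomial.X (-(rfun p d e m n i.1) - (τ i).1)
    else 1

/-- The Hasse polynomial `H_k = Σ_{τ ∈ S_k} u_τ · ∏ x_{-r_i-τ(i)} ∏ x_{r_i-τ(i)}`, where the
`u_τ` are `p`-adic units, is a nonzero polynomial. -/
/- ======================= auxiliary machinery ======================= -/

def Ffun (p d e m n : ℕ) (i : ℤ) : ℤ :=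
  if 0 < i then rfun p d e m n i else if i < 0 then -(rfun p d e m n i) else 0

abbrev SIdx (m n : ℕ) := {x // x ∈ IdxSet m n}


section basic
variable {p d e m n : ℕ}

lemma rfun_pos_bounds (hd : 0 < d) {i : ℤ} (hi : 0 < i) :
    (n : ℤ) + 1 ≤ rfun p d e m n i ∧ rfun p d e m n i ≤ n + d := by
  have hd' : (0:ℤ) < d := by exact_mod_cast hd
  have h1 : 0 ≤ ((n : ℤ) - p * i) % d := Int.emod_nonneg _ (by positivity)
  have h2 : ((n : ℤ) - p * i) % d < d := Int.emod_lt_of_pos _ hd'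
  rw [rfun, if_pos hi]
  constructor <;> omega

lemma rfun_neg_bounds (he : 0 < e) {i : ℤ} (hi : ¬ 0 < i) :
    (m : ℤ) + 1 ≤ rfun p d e m n i ∧ rfun p d e m n i ≤ m + e := by
  have he' : (0:ℤ) < e := by exact_mod_cast he
  have h1 : 0 ≤ ((p : ℤ) * i + m) % e := Int.emod_nonneg _ (by positivity)
  have h2 : ((p : ℤ) * i + m) % e < e := Int.emod_lt_of_pos _ he'
  rw [rfun, if_neg hi]
  constructor <;> omega

lemma Ffun_pos_bounds (hd : 0 < d) {i : ℤ} (hi : 0 < i) :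
    (n : ℤ) + 1 ≤ Ffun p d e m n i ∧ Ffun p d e m n i ≤ n + d := by
  rw [Ffun, if_pos hi]; exact rfun_pos_bounds hd hi

lemma Ffun_neg_bounds (he : 0 < e) {i : ℤ} (hi : i < 0) :
    -(m : ℤ) - e ≤ Ffun p d e m n i ∧ Ffun p d e m n i ≤ -(m : ℤ) - 1 := by
  rw [Ffun, if_neg (by omega), if_pos hi]
  have := rfun_neg_bounds (p := p) (d := d) (m := m) (n := n) he (i := i) (by omega)
  omega

lemma Ffun_zero : Ffun p d e m n 0 = 0 := by rw [Ffun, if_neg (by omega), if_neg (by omega)]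

lemma Ffun_injOn (hd : 0 < d) (he : 0 < e) (hcd : Nat.Coprime p d) (hce : Nat.Coprime p e)
    (hm : m < e) (hn : n < d) :
    ∀ i j : ℤ, -(m:ℤ) ≤ i → i ≤ n → -(m:ℤ) ≤ j → j ≤ n →
      Ffun p d e m n i = Ffun p d e m n j → i = j := by
  intro i j him hin hjm hjn hF
  have hd' : (0:ℤ) < d := by exact_mod_cast hd
  have he' : (0:ℤ) < e := by exact_mod_cast he
  rcases lt_trichotomy 0 i with hi | hi | hi <;> rcases lt_trichotomy 0 j with hj | hj | hj
  · -- both positive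
    rw [Ffun, if_pos hi, Ffun, if_pos hj, rfun, if_pos hi, rfun, if_pos hj] at hF
    have hmod : ((n : ℤ) - p * i) % d = ((n : ℤ) - p * j) % d := by omega
    have hdvd : (d:ℤ) ∣ ((n : ℤ) - p * i) - ((n : ℤ) - p * j) := by
      exact Int.dvd_of_emod_eq_zero (Int.emod_eq_emod_iff_emod_sub_eq_zero.mp hmod)
    have hdvd2 : (d:ℤ) ∣ (p:ℤ) * (j - i) := by
      have : ((n : ℤ) - p * i) - ((n : ℤ) - p * j) = (p:ℤ) * (j - i) := by ring
      rwa [this] at hdvd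
    have hco : IsCoprime (d:ℤ) (p:ℤ) := Nat.isCoprime_iff_coprime.mpr hcd.symm
    have : (d:ℤ) ∣ (j - i) := hco.dvd_of_dvd_mul_left hdvd2
    have := Int.eq_zero_of_abs_lt_dvd this (by rw [abs_lt]; omega)
    omega
  · exfalso
    have h1 := (Ffun_pos_bounds (p := p) (e := e) (m := m) (n := n) hd hi).1
    rw [hF, ← hj, Ffun_zero] at h1; omega
  · exfalso
    have h1 := (Ffun_pos_bounds (p := p) (e := e) (m := m) (n := n) hd hi).1
    have h2 := (Ffun_neg_bounds (p := p) (d := d) (m := m) (n := n) he hj).2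
    omega
  · exfalso
    have h1 := (Ffun_pos_bounds (p := p) (e := e) (m := m) (n := n) hd hj).1
    rw [← hF, ← hi, Ffun_zero] at h1; omega
  · omega
  · exfalso
    have h1 := (Ffun_neg_bounds (p := p) (d := d) (m := m) (n := n) he hj).2
    rw [← hF, ← hi, Ffun_zero] at h1; omega
  · exfalso
    have h1 := (Ffun_pos_bounds (p := p) (e := e) (m := m) (n := n) hd hj).1
    have h2 := (Ffun_neg_bounds (p := p) (d := d) (m := m) (n := n) he hi).2
    omega
  · exfalso
    have h1 := (Ffun_neg_bounds (p := p) (d := d) (m := m) (n := n) he hi).2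
    rw [hF, ← hj, Ffun_zero] at h1; omega
  · -- both negative
    rw [Ffun, if_neg (by omega), if_pos hi, Ffun, if_neg (by omega), if_pos hj,
      rfun, if_neg (by omega), rfun, if_neg (by omega)] at hF
    have hmod : ((p : ℤ) * i + m) % e = ((p : ℤ) * j + m) % e := by omega
    have hdvd : (e:ℤ) ∣ ((p : ℤ) * i + m) - ((p : ℤ) * j + m) :=
      Int.dvd_of_emod_eq_zero (Int.emod_eq_emod_iff_emod_sub_eq_zero.mp hmod)
    have hdvd2 : (e:ℤ) ∣ (p:ℤ) * (i - j) := by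
      have : ((p : ℤ) * i + m) - ((p : ℤ) * j + m) = (p:ℤ) * (i - j) := by ring
      rwa [this] at hdvd
    have hco : IsCoprime (e:ℤ) (p:ℤ) := Nat.isCoprime_iff_coprime.mpr hce.symm
    have : (e:ℤ) ∣ (i - j) := hco.dvd_of_dvd_mul_left hdvd2
    have := Int.eq_zero_of_abs_lt_dvd this (by rw [abs_lt]; omega)
    omega

end basic

open Finset in
lemma key_rearrange {ι : Type*} :
    ∀ (s : Finset ι), ∀ (F v w : ι → ℤ),
    (∀ i ∈ s, ∀ j ∈ s, F i = F j → i = j) →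
    (∀ i ∈ s, ∀ j ∈ s, v i = v j → i = j) →
    (∀ i ∈ s, ∀ j ∈ s, F i < F j → w i < w j) →
    s.image v = s.image w →
    (∑ i ∈ s, F i * v i ≤ ∑ i ∈ s, F i * w i) ∧
      (∑ i ∈ s, F i * v i = ∑ i ∈ s, F i * w i → ∀ i ∈ s, v i = w i) := by
  intro s
  induction s using Finset.strongInduction with
  | _ s IH =>
  intro F v w hF hv hw him
  rcases s.eq_empty_or_nonempty with rfl | hne
  · simp
  obtain ⟨i0, hi0s, hmax⟩ := s.exists_max_image F hne
  have hwinj : ∀ i ∈ s, ∀ j ∈ s, w i = w j → i = j := by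
    intro i hi j hj hij
    by_contra hne'
    rcases lt_trichotomy (F i) (F j) with h | h | h
    · exact absurd hij (ne_of_lt (hw i hi j hj h))
    · exact hne' (hF i hi j hj h)
    · exact absurd hij.symm (ne_of_lt (hw j hj i hi h))
  have hwmax : ∀ j ∈ s, j ≠ i0 → w j < w i0 := fun j hj hne' =>
    hw j hj i0 hi0s (lt_of_le_of_ne (hmax j hj) fun hEq => hne' (hF j hj i0 hi0s hEq))
  have hwmax' : ∀ j ∈ s, w j ≤ w i0 := by
    intro j hj
    rcases eq_or_ne j i0 with rfl | hne'
    · exact le_refl _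
    · exact le_of_lt (hwmax j hj hne')
  -- image of erase
  have himage_erase : ∀ (v' : ι → ℤ), (∀ i ∈ s, ∀ j ∈ s, v' i = v' j → i = j) →
      s.image v' = s.image w → v' i0 = w i0 →
      (s.erase i0).image v' = (s.erase i0).image w := by
    intro v' hv' him' h0
    have h1 : (s.erase i0).image v' = (s.image v').erase (w i0) := by
      ext x
      simp only [mem_image, mem_erase]
      constructor
      · rintro ⟨j, ⟨hj1, hj2⟩, rfl⟩
        exact ⟨fun hx => hj1 (hv' j hj2 i0 hi0s (hx.trans h0.symm)), j, hj2, rfl⟩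
      · rintro ⟨hx, j, hj, rfl⟩
        exact ⟨j, ⟨fun hji => hx (hji ▸ h0), hj⟩, rfl⟩
    have h2 : (s.erase i0).image w = (s.image w).erase (w i0) := by
      ext x
      simp only [mem_image, mem_erase]
      constructor
      · rintro ⟨j, ⟨hj1, hj2⟩, rfl⟩
        exact ⟨fun hx => hj1 (hwinj j hj2 i0 hi0s hx), j, hj2, rfl⟩
      · rintro ⟨hx, j, hj, rfl⟩
        exact ⟨j, ⟨fun hji => hx (hji ▸ rfl), hj⟩, rfl⟩
    rw [h1, h2, him']
  have hsub : s.erase i0 ⊂ s := Finset.erase_ssubset hi0s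
  have hFsub : ∀ i ∈ s.erase i0, ∀ j ∈ s.erase i0, F i = F j → i = j := fun i hi j hj =>
    hF i (mem_of_mem_erase hi) j (mem_of_mem_erase hj)
  have hwsub : ∀ i ∈ s.erase i0, ∀ j ∈ s.erase i0, F i < F j → w i < w j := fun i hi j hj =>
    hw i (mem_of_mem_erase hi) j (mem_of_mem_erase hj)
  have case1 : ∀ v' : ι → ℤ, (∀ i ∈ s, ∀ j ∈ s, v' i = v' j → i = j) →
      s.image v' = s.image w → v' i0 = w i0 →
      (∑ i ∈ s, F i * v' i ≤ ∑ i ∈ s, F i * w i) ∧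
        (∑ i ∈ s, F i * v' i = ∑ i ∈ s, F i * w i → ∀ i ∈ s, v' i = w i) := by
    intro v' hv' him' h0
    have hv'sub : ∀ i ∈ s.erase i0, ∀ j ∈ s.erase i0, v' i = v' j → i = j := fun i hi j hj =>
      hv' i (mem_of_mem_erase hi) j (mem_of_mem_erase hj)
    obtain ⟨hle, heq⟩ := IH (s.erase i0) hsub F v' w hFsub hv'sub hwsub
      (himage_erase v' hv' him' h0)
    have hs1 : ∑ i ∈ s, F i * v' i = F i0 * v' i0 + ∑ i ∈ s.erase i0, F i * v' i :=
      (Finset.add_sum_erase s _ hi0s).symm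
    have hs2 : ∑ i ∈ s, F i * w i = F i0 * w i0 + ∑ i ∈ s.erase i0, F i * w i :=
      (Finset.add_sum_erase s _ hi0s).symm
    constructor
    · rw [hs1, hs2, h0]; exact (add_le_add_iff_left _).mpr hle
    · intro hEq i hi
      have hEq' : ∑ i ∈ s.erase i0, F i * v' i = ∑ i ∈ s.erase i0, F i * w i := by
        rw [hs1, hs2, h0] at hEq; omega
      rcases eq_or_ne i i0 with rfl | hne'
      · exact h0
      · exact heq hEq' i (mem_erase.mpr ⟨hne', hi⟩)
  obtain ⟨i1, hi1s, hvi1⟩ : ∃ i1 ∈ s, v i1 = w i0 := by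
    have h : w i0 ∈ s.image w := mem_image_of_mem _ hi0s
    rw [← him] at h
    simpa using h
  rcases eq_or_ne i1 i0 with rfl | hne1
  · exact case1 v hv him hvi1
  -- swap case
  set v' : ι → ℤ := fun j => v (Equiv.swap i0 i1 j) with hv'def
  have hswap_mem : ∀ j ∈ s, (Equiv.swap i0 i1 j) ∈ s := by
    intro j hj
    rcases eq_or_ne j i0 with rfl | h1
    · rw [Equiv.swap_apply_left]; exact hi1s
    rcases eq_or_ne j i1 with rfl | h2
    · rw [Equiv.swap_apply_right]; exact hi0s
    · rw [Equiv.swap_apply_of_ne_of_ne h1 h2]; exact hj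
  have hv'inj : ∀ i ∈ s, ∀ j ∈ s, v' i = v' j → i = j := by
    intro i hi j hj hij
    have := hv _ (hswap_mem i hi) _ (hswap_mem j hj) hij
    exact (Equiv.swap i0 i1).injective this
  have hv'im : s.image v' = s.image w := by
    rw [← him]
    ext x
    simp only [mem_image]
    constructor
    · rintro ⟨j, hj, rfl⟩
      exact ⟨_, hswap_mem j hj, rfl⟩
    · rintro ⟨j, hj, rfl⟩
      refine ⟨Equiv.swap i0 i1 j, hswap_mem j hj, ?_⟩
      simp [hv'def]
    
  have hv'i0 : v' i0 = w i0 := by simp [hv'def, Equiv.swap_apply_left, hvi1]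
  obtain ⟨hle', _⟩ := case1 v' hv'inj hv'im hv'i0
  -- strict increase from v to v'
  have hi1s' : i1 ∈ s.erase i0 := mem_erase.mpr ⟨hne1, hi1s⟩
  have hsum_v : ∑ i ∈ s, F i * v i
      = F i0 * v i0 + (F i1 * v i1 + ∑ i ∈ (s.erase i0).erase i1, F i * v i) := by
    rw [← Finset.add_sum_erase s (fun i => F i * v i) hi0s,
      ← Finset.add_sum_erase (s.erase i0) (fun i => F i * v i) hi1s']
  have hsum_v' : ∑ i ∈ s, F i * v' i
      = F i0 * v i1 + (F i1 * v i0 + ∑ i ∈ (s.erase i0).erase i1, F i * v i) := by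
    rw [← Finset.add_sum_erase s (fun i => F i * v' i) hi0s,
      ← Finset.add_sum_erase (s.erase i0) (fun i => F i * v' i) hi1s']
    have e0 : v' i0 = v i1 := by simp [hv'def]
    have e1 : v' i1 = v i0 := by simp [hv'def]
    have e2 : ∑ i ∈ (s.erase i0).erase i1, F i * v' i
        = ∑ i ∈ (s.erase i0).erase i1, F i * v i := by
      apply Finset.sum_congr rfl
      intro j hj
      simp only [mem_erase] at hj
      simp [hv'def, Equiv.swap_apply_of_ne_of_ne hj.2.1 hj.1]
    rw [e0, e1, e2]
  have hFlt : F i1 < F i0 :=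
    lt_of_le_of_ne (hmax i1 hi1s) fun hEq => hne1 (hF i1 hi1s i0 hi0s hEq)
  have hvlt : v i0 < v i1 := by
    have h1 : v i0 ≤ w i0 := by
      have : v i0 ∈ s.image w := him ▸ mem_image_of_mem _ hi0s
      simp only [mem_image] at this
      obtain ⟨j, hj, hj2⟩ := this
      rw [← hj2]; exact hwmax' j hj
    have h2 : v i0 ≠ v i1 := fun hEq => hne1 (hv i1 hi1s i0 hi0s hEq.symm)
    omega
  have hstrict : ∑ i ∈ s, F i * v i < ∑ i ∈ s, F i * v' i := by
    rw [hsum_v, hsum_v']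
    nlinarith [mul_pos (sub_pos.mpr hFlt) (sub_pos.mpr hvlt)]
  exact ⟨le_of_lt (lt_of_lt_of_le hstrict hle'), fun hEq => absurd hEq (ne_of_lt (lt_of_lt_of_le hstrict hle'))⟩

def tau0fun (p d e m n : ℕ)
    (h : ((IdxSet m n).image (Ffun p d e m n)).card = (IdxSet m n).card) :
    SIdx m n → SIdx m n := fun i =>
  (IdxSet m n).orderIsoOfFin rfl
    ((((IdxSet m n).image (Ffun p d e m n)).orderIsoOfFin h).symm
      ⟨Ffun p d e m n i.1, Finset.mem_image_of_mem _ i.2⟩)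

section tau0
variable {p d e m n : ℕ}
  {h : ((IdxSet m n).image (Ffun p d e m n)).card = (IdxSet m n).card}

lemma tau0_lt_iff (i j : SIdx m n) :
    tau0fun p d e m n h i < tau0fun p d e m n h j ↔
      Ffun p d e m n i.1 < Ffun p d e m n j.1 := by
  rw [tau0fun, tau0fun, OrderIso.lt_iff_lt, OrderIso.lt_iff_lt, Subtype.mk_lt_mk]

lemma tau0_le_iff (i j : SIdx m n) :
    tau0fun p d e m n h i ≤ tau0fun p d e m n h j ↔
      Ffun p d e m n i.1 ≤ Ffun p d e m n j.1 := by
  rw [← not_lt, ← not_lt, not_iff_not]; exact tau0_lt_iff j i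

variable (hFinj : ∀ i j : SIdx m n, Ffun p d e m n i.1 = Ffun p d e m n j.1 → i = j)

include hFinj in
lemma tau0_injective : Function.Injective (tau0fun p d e m n h) := by
  intro i j hij
  rcases lt_trichotomy (Ffun p d e m n i.1) (Ffun p d e m n j.1) with hc | hc | hc
  · exact absurd hij (ne_of_lt ((tau0_lt_iff (h := h) i j).mpr hc))
  · exact hFinj i j hc
  · exact absurd hij.symm (ne_of_lt ((tau0_lt_iff (h := h) j i).mpr hc))

include hFinj in
lemma tau0_bijective : Function.Bijective (tau0fun p d e m n h) :=
  Finite.injective_iff_bijective.mp (tau0_injective hFinj)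

include hFinj in
lemma card_filter_le (i : SIdx m n) :
    (Finset.univ.filter fun j : SIdx m n =>
        Ffun p d e m n j.1 ≤ Ffun p d e m n i.1).card
      = (Finset.Icc (-(m:ℤ)) ((tau0fun p d e m n h i).1)).card := by
  apply Finset.card_bij (fun a _ => (tau0fun p d e m n h a).1)
  · intro a ha
    rw [Finset.mem_filter] at ha
    rw [Finset.mem_Icc]
    refine ⟨(Finset.mem_Icc.mp (tau0fun p d e m n h a).2).1, ?_⟩
    exact Subtype.coe_le_coe.mpr ((tau0_le_iff (h := h) a i).mpr ha.2)
  · intro a _ b _ hab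
    exact tau0_injective hFinj (Subtype.ext hab)
  · intro b hb
    rw [Finset.mem_Icc] at hb
    have hbmem : b ∈ IdxSet m n := by
      rw [Finset.mem_Icc]
      exact ⟨hb.1, le_trans hb.2 (Finset.mem_Icc.mp (tau0fun p d e m n h i).2).2⟩
    obtain ⟨j, hj⟩ := (tau0_bijective (h := h) hFinj).2 ⟨b, hbmem⟩
    refine ⟨j, ?_, by rw [hj]⟩
    rw [Finset.mem_filter]
    refine ⟨Finset.mem_univ _, (tau0_le_iff (h := h) j i).mp ?_⟩
    rw [hj]
    exact Subtype.coe_le_coe.mp hb.2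

include hFinj in
lemma card_filter_ge (i : SIdx m n) :
    (Finset.univ.filter fun j : SIdx m n =>
        Ffun p d e m n i.1 ≤ Ffun p d e m n j.1).card
      = (Finset.Icc ((tau0fun p d e m n h i).1) (n:ℤ)).card := by
  apply Finset.card_bij (fun a _ => (tau0fun p d e m n h a).1)
  · intro a ha
    rw [Finset.mem_filter] at ha
    rw [Finset.mem_Icc]
    refine ⟨Subtype.coe_le_coe.mpr ((tau0_le_iff (h := h) i a).mpr ha.2),
      (Finset.mem_Icc.mp (tau0fun p d e m n h a).2).2⟩
  · intro a _ b _ hab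
    exact tau0_injective hFinj (Subtype.ext hab)
  · intro b hb
    rw [Finset.mem_Icc] at hb
    have hbmem : b ∈ IdxSet m n := by
      rw [Finset.mem_Icc]
      exact ⟨le_trans (Finset.mem_Icc.mp (tau0fun p d e m n h i).2).1 hb.1, hb.2⟩
    obtain ⟨j, hj⟩ := (tau0_bijective (h := h) hFinj).2 ⟨b, hbmem⟩
    refine ⟨j, ?_, by rw [hj]⟩
    rw [Finset.mem_filter]
    refine ⟨Finset.mem_univ _, (tau0_le_iff (h := h) i j).mp ?_⟩
    exact Subtype.coe_le_coe.mp (by rw [hj]; exact hb.1)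

end tau0

lemma prod_monomial_one {R : Type*} [CommSemiring R] {ι σ : Type*} (s : Finset ι)
    (f : ι → (σ →₀ ℕ)) :
    (∏ i ∈ s, MvPolynomial.monomial (f i) (1:R)) = MvPolynomial.monomial (∑ i ∈ s, f i) 1 := by
  induction s using Finset.cons_induction with
  | empty => simp
  | cons a s ha ih => rw [Finset.prod_cons, Finset.sum_cons, ih, MvPolynomial.monomial_mul, mul_one]

def Lsq : (ℤ →₀ ℕ) →+ ℤ := Finsupp.liftAddHom fun j : ℤ => multiplesHom ℤ (j ^ 2)

lemma Lsq_single (a : ℤ) : Lsq (Finsupp.single a 1) = a ^ 2 := by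
  rw [Lsq, Finsupp.liftAddHom_apply_single, multiplesHom_apply, one_nsmul]


def wvec (p d e m n : ℕ) (τ : Equiv.Perm (SIdx m n)) : ℤ →₀ ℕ :=
  ∑ i : SIdx m n,
    if i.1 = 0 then 0 else Finsupp.single (Ffun p d e m n i.1 - (τ i).1) 1

section withparams
variable {p d e m n : ℕ}

lemma monom_eq {R : Type*} [CommRing R] (τ : Equiv.Perm (SIdx m n)) :
    monom p d e m n R τ = MvPolynomial.monomial (wvec p d e m n τ) 1 := by
  rw [monom, wvec, ← prod_monomial_one]
  apply Finset.prod_congr rfl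
  intro i _
  rcases lt_trichotomy (0:ℤ) i.1 with hi | hi | hi
  · rw [if_pos hi, if_neg (by omega), Ffun, if_pos hi]
    rfl
  · rw [if_neg (by omega), if_neg (by omega), if_pos hi.symm]
    simp
  · rw [if_neg (by omega), if_pos hi, if_neg (by omega), Ffun, if_neg (by omega), if_pos hi]
    rfl

lemma Lsq_wvec (τ : Equiv.Perm (SIdx m n)) (hτ0 : ∀ i : SIdx m n, i.1 = 0 → (τ i).1 = 0) :
    Lsq (wvec p d e m n τ) = ∑ i : SIdx m n, (Ffun p d e m n i.1 - (τ i).1) ^ 2 := by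
  rw [wvec, map_sum]
  apply Finset.sum_congr rfl
  intro i _
  by_cases hi : i.1 = 0
  · rw [if_pos hi, map_zero, hτ0 i hi, hi, Ffun_zero]
    norm_num
  · rw [if_neg hi, Lsq_single]

lemma image_perm_coe (σ : Equiv.Perm (SIdx m n)) :
    Finset.univ.image (fun i : SIdx m n => (σ i).1)
      = Finset.univ.image (fun i : SIdx m n => i.1) := by
  ext x
  simp only [Finset.mem_image, Finset.mem_univ, true_and]
  constructor
  · rintro ⟨j, rfl⟩; exact ⟨σ j, rfl⟩
  · rintro ⟨j, rfl⟩; exact ⟨σ.symm j, by simp⟩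

end withparams

theorem stmt15 (p d e m n : ℕ) [Fact p.Prime] (hd : 0 < d) (he : 0 < e)
    (hcd : Nat.Coprime p d) (hce : Nat.Coprime p e) (hm : m < e) (hn : n < d)
    (u : Equiv.Perm {x // x ∈ IdxSet m n} → ℤ_[p])
    (hu : ∀ τ ∈ Sk p d e m n, IsUnit (u τ)) :
    ∑ τ ∈ Sk p d e m n, MvPolynomial.C (u τ) * monom p d e m n ℤ_[p] τ ≠ 0 := by
  -- injectivity of Ffun on the subtype
  have hFinj : ∀ i j : SIdx m n, Ffun p d e m n i.1 = Ffun p d e m n j.1 → i = j := by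
    intro i j hij
    have hi := Finset.mem_Icc.mp i.2
    have hj := Finset.mem_Icc.mp j.2
    exact Subtype.ext (Ffun_injOn hd he hcd hce hm hn i.1 j.1 hi.1 hi.2 hj.1 hj.2 hij)
  have hcard : ((IdxSet m n).image (Ffun p d e m n)).card = (IdxSet m n).card := by
    apply Finset.card_image_of_injOn
    intro a ha b hb hab
    have ha' := Finset.mem_Icc.mp ha
    have hb' := Finset.mem_Icc.mp hb
    exact Ffun_injOn hd he hcd hce hm hn a b ha'.1 ha'.2 hb'.1 hb'.2 hab
  have hbij := tau0_bijective (h := hcard) hFinj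
  set τ₀ : Equiv.Perm (SIdx m n) := Equiv.ofBijective (tau0fun p d e m n hcard) hbij with hτ₀
  have hτ₀app : ∀ i, τ₀ i = tau0fun p d e m n hcard i := fun i => rfl
  -- sign facts
  have hFpos : ∀ i : SIdx m n, 0 < i.1 →
      (n:ℤ) + 1 ≤ Ffun p d e m n i.1 ∧ Ffun p d e m n i.1 ≤ n + d :=
    fun i hi => Ffun_pos_bounds hd hi
  have hFneg : ∀ i : SIdx m n, i.1 < 0 →
      -(m:ℤ) - e ≤ Ffun p d e m n i.1 ∧ Ffun p d e m n i.1 ≤ -(m:ℤ) - 1 :=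
    fun i hi => Ffun_neg_bounds he hi
  have hF0 : ∀ i : SIdx m n, i.1 = 0 → Ffun p d e m n i.1 = 0 := by
    intro i hi; rw [hi, Ffun_zero]
  have hsign : ∀ i : SIdx m n, 0 < Ffun p d e m n i.1 → 0 < i.1 := by
    intro i hFi
    rcases lt_trichotomy (0:ℤ) i.1 with hi | hi | hi
    · exact hi
    · rw [hF0 i hi.symm] at hFi; omega
    · have := (hFneg i hi).2; omega
  have hsign' : ∀ i : SIdx m n, Ffun p d e m n i.1 < 0 → i.1 < 0 := by
    intro i hFi
    rcases lt_trichotomy (0:ℤ) i.1 with hi | hi | hi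
    · have := (hFpos i hi).1; omega
    · rw [hF0 i hi.symm] at hFi; omega
    · exact hi
  -- membership facts
  have hmem : ∀ i : SIdx m n, -(m:ℤ) ≤ i.1 ∧ i.1 ≤ n := fun i => Finset.mem_Icc.mp i.2
  -- τ₀ ∈ Sk
  have hzero : ∀ i : SIdx m n, i.1 = 0 → (τ₀ i).1 = 0 := by
    intro i hi
    have hc1 := card_filter_le (h := hcard) hFinj i
    have hc2 : (Finset.univ.filter fun j : SIdx m n =>
        Ffun p d e m n j.1 ≤ Ffun p d e m n i.1).card
        = (Finset.Icc (-(m:ℤ)) 0).card := by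
      apply Finset.card_bij (fun a _ => a.1)
      · intro a ha
        rw [Finset.mem_filter, hF0 i hi] at ha
        rw [Finset.mem_Icc]
        refine ⟨(hmem a).1, ?_⟩
        by_contra hpos
        have := (hFpos a (by omega)).1
        omega
      · intro a _ b _ hab; exact Subtype.ext hab
      · intro b hb
        rw [Finset.mem_Icc] at hb
        have hbmem : b ∈ IdxSet m n := Finset.mem_Icc.mpr ⟨hb.1, by exact_mod_cast le_trans hb.2 (by exact_mod_cast Nat.zero_le n : (0:ℤ) ≤ n)⟩
        refine ⟨⟨b, hbmem⟩, ?_, rfl⟩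
        rw [Finset.mem_filter, hF0 i hi]
        refine ⟨Finset.mem_univ _, ?_⟩
        rcases eq_or_lt_of_le hb.2 with hb0 | hb0
        · rw [hF0 ⟨b, hbmem⟩ hb0]
        · have := (hFneg ⟨b, hbmem⟩ hb0).2; omega
    rw [hc2] at hc1
    rw [Int.card_Icc, Int.card_Icc] at hc1
    have h1 := (hmem (tau0fun p d e m n hcard i)).1
    rw [hτ₀app]
    omega
  have hge : ∀ i : SIdx m n, 0 < i.1 → rfun p d e m n i.1 - d ≤ (τ₀ i).1 := by
    intro i hi
    have hc1 := card_filter_ge (h := hcard) hFinj i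
    have hc2 : (Finset.univ.filter fun j : SIdx m n =>
        Ffun p d e m n i.1 ≤ Ffun p d e m n j.1).card
        ≤ (Finset.Icc (Ffun p d e m n i.1) ((n:ℤ) + d)).card := by
      apply Finset.card_le_card_of_injOn (fun a => Ffun p d e m n a.1)
      · intro a ha
        rw [Finset.mem_coe, Finset.mem_filter] at ha
        rw [Finset.mem_coe, Finset.mem_Icc]
        refine ⟨ha.2, ?_⟩
        have hFi := (hFpos i hi).1
        have hapos : 0 < a.1 := hsign a (by omega)
        exact (hFpos a hapos).2
      · intro a _ b _ hab
        exact hFinj a b hab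
    rw [hc1] at hc2
    rw [Int.card_Icc, Int.card_Icc] at hc2
    have h1 := (hmem (tau0fun p d e m n hcard i)).2
    have h2 := (hFpos i hi).2
    have h3 := (hFpos i hi).1
    have hFeq : Ffun p d e m n i.1 = rfun p d e m n i.1 := by rw [Ffun, if_pos hi]
    rw [hτ₀app]
    omega
  have hle : ∀ i : SIdx m n, i.1 < 0 → (τ₀ i).1 ≤ -(rfun p d e m n i.1) + e := by
    intro i hi
    have hc1 := card_filter_le (h := hcard) hFinj i
    have hc2 : (Finset.univ.filter fun j : SIdx m n =>
        Ffun p d e m n j.1 ≤ Ffun p d e m n i.1).card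
        ≤ (Finset.Icc (-(m:ℤ) - e) (Ffun p d e m n i.1)).card := by
      apply Finset.card_le_card_of_injOn (fun a => Ffun p d e m n a.1)
      · intro a ha
        rw [Finset.mem_coe, Finset.mem_filter] at ha
        rw [Finset.mem_coe, Finset.mem_Icc]
        refine ⟨?_, ha.2⟩
        have hFi := (hFneg i hi).2
        have haneg : a.1 < 0 := hsign' a (by omega)
        exact (hFneg a haneg).1
      · intro a _ b _ hab
        exact hFinj a b hab
    rw [hc1] at hc2
    rw [Int.card_Icc, Int.card_Icc] at hc2
    have h1 := (hmem (tau0fun p d e m n hcard i)).1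
    have h2 := (hFneg i hi).1
    have h3 := (hFneg i hi).2
    have hFeq : Ffun p d e m n i.1 = -(rfun p d e m n i.1) := by
      rw [Ffun, if_neg (by omega), if_pos hi]
    rw [hτ₀app]
    omega
  have hτ₀mem : τ₀ ∈ Sk p d e m n := by
    rw [Sk, Finset.mem_filter]
    exact ⟨Finset.mem_univ _, hzero, hge, hle⟩
  -- uniqueness of the monomial of τ₀
  have huniq : ∀ τ ∈ Sk p d e m n, wvec p d e m n τ = wvec p d e m n τ₀ → τ = τ₀ := by
    intro τ hτ hw
    rw [Sk, Finset.mem_filter] at hτ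
    obtain ⟨-, hτz, -, -⟩ := hτ
    have hsq : ∑ i : SIdx m n, (Ffun p d e m n i.1 - (τ i).1) ^ 2
        = ∑ i : SIdx m n, (Ffun p d e m n i.1 - (τ₀ i).1) ^ 2 := by
      rw [← Lsq_wvec τ hτz, ← Lsq_wvec τ₀ hzero, hw]
    have hexp : ∀ σ : Equiv.Perm (SIdx m n),
        ∑ i : SIdx m n, (Ffun p d e m n i.1 - (σ i).1) ^ 2
          + 2 * ∑ i : SIdx m n, Ffun p d e m n i.1 * (σ i).1
        = ∑ i : SIdx m n, (Ffun p d e m n i.1) ^ 2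
          + ∑ i : SIdx m n, ((σ i).1) ^ 2 := by
      intro σ
      rw [Finset.mul_sum, ← Finset.sum_add_distrib, ← Finset.sum_add_distrib]
      apply Finset.sum_congr rfl
      intro i _
      ring
    have hsq2 : ∑ i : SIdx m n, ((τ i).1) ^ 2 = ∑ i : SIdx m n, ((τ₀ i).1) ^ 2 := by
      rw [Equiv.sum_comp τ (fun j : SIdx m n => (j.1 : ℤ) ^ 2),
        Equiv.sum_comp τ₀ (fun j : SIdx m n => (j.1 : ℤ) ^ 2)]
    have hFsum : ∑ i : SIdx m n, Ffun p d e m n i.1 * (τ i).1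
        = ∑ i : SIdx m n, Ffun p d e m n i.1 * (τ₀ i).1 := by
      have e1 := hexp τ
      have e2 := hexp τ₀
      omega
    have hkey := key_rearrange (Finset.univ : Finset (SIdx m n))
      (fun i => Ffun p d e m n i.1) (fun i => (τ i).1) (fun i => (τ₀ i).1)
      (fun i _ j _ hij => hFinj i j hij)
      (fun i _ j _ hij => τ.injective (Subtype.ext hij))
      (fun i _ j _ hij => Subtype.coe_lt_coe.mpr ((tau0_lt_iff (h := hcard) i j).mpr hij))
      (by rw [image_perm_coe τ, image_perm_coe τ₀])
    have := hkey.2 hFsum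
    apply Equiv.ext
    intro i
    exact Subtype.ext (this i (Finset.mem_univ i))
  -- final computation
  intro hzero'
  have hcoeff : MvPolynomial.coeff (wvec p d e m n τ₀)
      (∑ τ ∈ Sk p d e m n, MvPolynomial.C (u τ) * monom p d e m n ℤ_[p] τ) = u τ₀ := by
    rw [MvPolynomial.coeff_sum]
    rw [Finset.sum_eq_single τ₀]
    · rw [MvPolynomial.coeff_C_mul, monom_eq, MvPolynomial.coeff_monomial, if_pos rfl, mul_one]
    · intro τ hτ hne
      rw [MvPolynomial.coeff_C_mul, monom_eq, MvPolynomial.coeff_monomial, if_neg, mul_zero]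
      exact fun hEq => hne (huniq τ hτ hEq)
    · intro habs
      exact absurd hτ₀mem habs
  rw [hzero'] at hcoeff
  rw [MvPolynomial.coeff_zero] at hcoeff
  exact (hu τ₀ hτ₀mem).ne_zero hcoeff.symm

end
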